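/- Let U and V be unitary operators on H_a ⊗ H and H_b ⊗ H respectively that are block encodings of operators A and B on H, i.e., (⟨0_a| ⊗ I) U (|0_a⟩ ⊗ I) = A and (⟨0_b| ⊗ I) V (|0_b⟩ ⊗ I) = B. Then (I_b ⊗ U)(I_a ⊗ V), suitably interpreted as an operator on H_a ⊗ H_b ⊗ H, is a block encoding of AB: projecting the combined ancilla onto |0_a⟩|0_b⟩ yields AB. -/
import Mathlib


open Matrix

/-- Product of block-encoded matrices: if `U` block-encodes `A` (ancilla `a`) and `V`
block-encodes `B` (ancilla `b`), then `(I_b ⊗ U)(I_a ⊗ V)` block-encodes `AB` with respect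
to the combined ancilla projector `|0_a 0_b⟩⟨0_a 0_b|`. -/
theorem stmt_16 {p q n : ℕ}
    (U : Matrix (Fin (p + 1) × Fin n) (Fin (p + 1) × Fin n) ℂ)
    (V : Matrix (Fin (q + 1) × Fin n) (Fin (q + 1) × Fin n) ℂ)
    (hU : U ∈ Matrix.unitaryGroup (Fin (p + 1) × Fin n) ℂ)
    (hV : V ∈ Matrix.unitaryGroup (Fin (q + 1) × Fin n) ℂ)
    (A B : Matrix (Fin n) (Fin n) ℂ)
    (hA : ∀ i j, A i j = U (0, i) (0, j))
    (hB : ∀ i j, B i j = V (0, i) (0, j)) :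
    ∀ i j : Fin n,
      ((Matrix.of (fun (x y : Fin (p + 1) × Fin (q + 1) × Fin n) =>
          if x.2.1 = y.2.1 then U (x.1, x.2.2) (y.1, y.2.2) else 0)) *
        (Matrix.of (fun (x y : Fin (p + 1) × Fin (q + 1) × Fin n) =>
          if x.1 = y.1 then V (x.2.1, x.2.2) (y.2.1, y.2.2) else 0)))
        (0, 0, i) (0, 0, j) = (A * B) i j := by
  intro i j
  simp only [Matrix.mul_apply, Matrix.of_apply, Fintype.sum_prod_type, hA, hB]
  simp [ite_mul, mul_ite, Finset.sum_ite_eq', eq_comm]
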